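/- Let g: ℝ^d → ℝ be convex, f: ℝ^d → ℝ differentiable, and define D_g(x, λ) = −2λ min_y [⟨∇f(x), y−x⟩ + (λ/2)‖y−x‖² + g(y) − g(x)]. Then for 0 < λ₁ ≤ λ₂ we have D_g(x, λ₂) ≥ D_g(x, λ₁). -/

import Mathlib

open RealInnerProductSpace

/-- The quantity `D_g(x, λ)` from the proximal-PL inequality. -/
noncomputable def Dg {d : ℕ} (f g : EuclideanSpace ℝ (Fin d) → ℝ)
    (x : EuclideanSpace ℝ (Fin d)) (lam : ℝ) : ℝ :=
  -2 * lam * ⨅ y : EuclideanSpace ℝ (Fin d),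
    (⟪gradient f x, y - x⟫ + lam / 2 * ‖y - x‖ ^ 2 + g y - g x)

theorem Dg_monotone
    {d : ℕ} (f g : EuclideanSpace ℝ (Fin d) → ℝ)
    (hdiff : Differentiable ℝ f) (hconv : ConvexOn ℝ Set.univ g)
    (hattain : ∀ (x : EuclideanSpace ℝ (Fin d)) (lam : ℝ), 0 < lam →
      ∃ y, IsMinOn (fun y => ⟪gradient f x, y - x⟫ + lam / 2 * ‖y - x‖ ^ 2 + g y - g x)
        Set.univ y)
    (lam₁ lam₂ : ℝ) (h₁ : 0 < lam₁) (h₁₂ : lam₁ ≤ lam₂) :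
    ∀ x, Dg f g x lam₁ ≤ Dg f g x lam₂ := by
  intro x
  have h₂ : 0 < lam₂ := h₁.trans_le h₁₂
  set v := gradient f x with hv
  set φ₁ : EuclideanSpace ℝ (Fin d) → ℝ :=
    fun y => ⟪v, y - x⟫ + lam₁ / 2 * ‖y - x‖ ^ 2 + g y - g x with hφ₁
  set φ₂ : EuclideanSpace ℝ (Fin d) → ℝ :=
    fun y => ⟪v, y - x⟫ + lam₂ / 2 * ‖y - x‖ ^ 2 + g y - g x with hφ₂
  obtain ⟨y₁, hy₁⟩ := hattain x lam₁ h₁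
  obtain ⟨y₂, hy₂⟩ := hattain x lam₂ h₂
  have hy₁' : ∀ y, φ₁ y₁ ≤ φ₁ y := fun y => hy₁ (Set.mem_univ y)
  have hy₂' : ∀ y, φ₂ y₂ ≤ φ₂ y := fun y => hy₂ (Set.mem_univ y)
  have hbdd₁ : BddBelow (Set.range φ₁) := ⟨φ₁ y₁, by rintro _ ⟨y, rfl⟩; exact hy₁' y⟩
  have hbdd₂ : BddBelow (Set.range φ₂) := ⟨φ₂ y₂, by rintro _ ⟨y, rfl⟩; exact hy₂' y⟩
  have hinf₁ : (⨅ y, φ₁ y) = φ₁ y₁ :=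
    le_antisymm (ciInf_le hbdd₁ y₁) (le_ciInf hy₁')
  -- the comparison point
  set t : ℝ := lam₁ / lam₂ with ht
  have ht0 : 0 ≤ t := le_of_lt (div_pos h₁ h₂)
  have ht1 : t ≤ 1 := div_le_one_of_le₀ h₁₂ h₂.le
  have hlt : lam₂ * t = lam₁ := by rw [ht, mul_div_assoc']; exact mul_div_cancel_left₀ lam₁ h₂.ne'
  set y' : EuclideanSpace ℝ (Fin d) := x + t • (y₁ - x) with hy'
  have hy'x : y' - x = t • (y₁ - x) := by simp [hy']
  have hgconv : g y' ≤ t * g y₁ + (1 - t) * g x := by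
    have : y' = t • y₁ + (1 - t) • x := by
      rw [hy', smul_sub]; module
    rw [this]
    exact hconv.2 (Set.mem_univ y₁) (Set.mem_univ x) ht0 (by linarith) (by ring)
  have hkey : lam₂ * φ₂ y' ≤ lam₁ * φ₁ y₁ := by
    have hinner : ⟪v, y' - x⟫ = t * ⟪v, y₁ - x⟫ := by
      rw [hy'x, real_inner_smul_right]
    have hnorm : ‖y' - x‖ ^ 2 = t ^ 2 * ‖y₁ - x‖ ^ 2 := by
      rw [hy'x, norm_smul, Real.norm_eq_abs, abs_of_nonneg ht0]; ring
    have h2 : lam₂ * φ₂ y' ≤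
        lam₂ * (t * ⟪v, y₁ - x⟫ + lam₂ / 2 * (t ^ 2 * ‖y₁ - x‖ ^ 2)
          + (t * g y₁ + (1 - t) * g x) - g x) := by
      apply mul_le_mul_of_nonneg_left _ h₂.le
      simp only [hφ₂, hinner, hnorm]
      linarith [hgconv]
    refine h2.trans (le_of_eq ?_)
    simp only [hφ₁]
    rw [ht]
    field_simp
    ring
  have hmain : lam₂ * (⨅ y, φ₂ y) ≤ lam₁ * (⨅ y, φ₁ y) := by
    rw [hinf₁]
    exact le_trans (mul_le_mul_of_nonneg_left (ciInf_le hbdd₂ y') h₂.le) hkey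
  simp only [Dg]
  change -2 * lam₁ * (⨅ y, φ₁ y) ≤ -2 * lam₂ * (⨅ y, φ₂ y)
  linarith
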